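/- Let n ≥ 3, let L be the line (path) on [n] with binomial edge ideal I_L, let g = x_1 y_n − x_n y_1, let J_G̃ be the binomial edge ideal of the complete graph on [n], and let M be the monomial ideal generated by the n−1 monomials x_2 x_3 ⋯ x_i y_{i+1} ⋯ y_{n−1} for i = 1, …, n−1. Then I_L : g = (I_L, M), and consequently (I_L : g) + J_G̃ = M + J_G̃. -/
import Mathlib


open MvPolynomial CategoryTheory Opposite

noncomputable section

namespace BEIPaper

/-- The `x_i` variable of the polynomial ring `K[x_1,…,x_n,y_1,…,y_n]`,
which we realize as `MvPolynomial (σ ⊕ σ) K`, where `Sum.inl i ↦ x_i` and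
`Sum.inr i ↦ y_i`. -/
def xv (K : Type) [Field K] {σ : Type} (i : σ) : MvPolynomial (σ ⊕ σ) K :=
  X (Sum.inl i)

/-- The `y_i` variable. -/
def yv (K : Type) [Field K] {σ : Type} (i : σ) : MvPolynomial (σ ⊕ σ) K :=
  X (Sum.inr i)

/-- The binomial edge ideal of a graph `G` on the vertex set `[n]`:
generated by the binomials `x_i y_j - x_j y_i` for edges `{i, j}` with `i < j`. -/
def bei (K : Type) [Field K] {n : ℕ} (G : SimpleGraph (Fin n)) :
    Ideal (MvPolynomial (Fin n ⊕ Fin n) K) :=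
  Ideal.span {f | ∃ i j : Fin n, i < j ∧ G.Adj i j ∧
    f = xv K i * yv K j - xv K j * yv K i}

/-- The prime ideal `P_T(G)`: generated by `{x_i, y_i : i ∈ T}` together with the
binomial edge ideals of the complete graphs on the vertex sets of the connected
components of the induced subgraph of `G` on `[n] ∖ T` (equivalently, all binomials
`x_i y_j - x_j y_i` where `i < j` lie outside `T` in the same connected component). -/
def PT (K : Type) [Field K] {n : ℕ} (G : SimpleGraph (Fin n)) (T : Set (Fin n)) :
    Ideal (MvPolynomial (Fin n ⊕ Fin n) K) :=
  Ideal.span ((xv K '' T) ∪ (yv K '' T) ∪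
    {f | ∃ i j : Fin n, ∃ (hi : i ∈ Tᶜ) (hj : j ∈ Tᶜ), i < j ∧
      (G.induce Tᶜ).Reachable ⟨i, hi⟩ ⟨j, hj⟩ ∧
      f = xv K i * yv K j - xv K j * yv K i})

/-- `c(T)`: the number of connected components of the induced subgraph of `G`
on `[n] ∖ T`. -/
def ncomp {n : ℕ} (G : SimpleGraph (Fin n)) (T : Set (Fin n)) : ℕ :=
  Nat.card (G.induce Tᶜ).ConnectedComponent

/-- The graded (irrelevant) maximal ideal of a polynomial ring, generated by
all the variables. -/
def mIdeal (K : Type) [Field K] (σ : Type) : Ideal (MvPolynomial σ K) :=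
  Ideal.span (Set.range X)

/-- The depth of a module `M` with respect to an ideal `I`: the supremum of lengths
of `M`-regular sequences consisting of elements of `I`. -/
def depth {R : Type} [CommRing R] (I : Ideal R) (M : Type) [AddCommGroup M]
    [Module R M] : ℕ∞ :=
  sSup {k : ℕ∞ | ∃ rs : List R, (rs.length : ℕ∞) = k ∧ (∀ r ∈ rs, r ∈ I) ∧
    RingTheory.Sequence.IsRegular M rs}

/-- The (Krull) dimension of a module: the Krull dimension of `R` modulo the
annihilator of `M`. -/
def mdim (R : Type) [CommRing R] (M : Type) [AddCommGroup M] [Module R M] :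
    WithBot ℕ∞ :=
  ringKrullDim (R ⧸ Module.annihilator R M)

/-- `M` is a Cohen-Macaulay `R`-module of dimension `d` (depth and dimension both
being taken with respect to the given (maximal graded) ideal `I`). -/
def IsCMmodOfDim {R : Type} [CommRing R] (I : Ideal R) (M : Type) [AddCommGroup M]
    [Module R M] (d : ℕ) : Prop :=
  (depth I M : WithBot ℕ∞) = mdim R M ∧ mdim R M = (d : ℕ∞)

/-- The quotient `S/J` of a polynomial ring `S` by an ideal `J` is a Cohen-Macaulay
ring: its depth with respect to the graded maximal ideal equals its Krull dimension. -/
def IsCMQuot (K : Type) [Field K] {σ : Type} (J : Ideal (MvPolynomial σ K)) : Prop :=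
  (depth (mIdeal K σ) (MvPolynomial σ K ⧸ J) : WithBot ℕ∞) =
    ringKrullDim (MvPolynomial σ K ⧸ J)

/-- `S/I` is approximately Cohen-Macaulay: there is a homogeneous element `x` of
positive degree in the irrelevant ideal of `R = S/I` (i.e. the image of a homogeneous
polynomial `f` of positive degree) such that `R/x^m R = S/(I + (f^m))` is a
Cohen-Macaulay ring of dimension `dim R - 1` for all `m ≥ 1`. -/
def IsACM (K : Type) [Field K] {σ : Type} (I : Ideal (MvPolynomial σ K)) : Prop :=
  ∃ (d : ℕ) (f : MvPolynomial σ K), 0 < d ∧ f.IsHomogeneous d ∧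
    ∀ m : ℕ, 1 ≤ m →
      IsCMQuot K (I ⊔ Ideal.span {f ^ m}) ∧
      ringKrullDim (MvPolynomial σ K ⧸ (I ⊔ Ideal.span {f ^ m})) + 1 =
        ringKrullDim (MvPolynomial σ K ⧸ I)

/-- The Hilbert series of `S/I` (for a homogeneous ideal `I`), as a power series
over `ℤ`: the `m`-th coefficient is the `K`-dimension of the degree-`m` graded
component of `S/I`, i.e. of the image of the space of degree-`m` homogeneous
polynomials in `S/I`. -/
def hseries (K : Type) [Field K] {σ : Type} (I : Ideal (MvPolynomial σ K)) :
    PowerSeries ℤ :=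
  PowerSeries.mk fun m =>
    (Module.finrank K (Submodule.map (Ideal.Quotient.mkₐ K I).toLinearMap
      (homogeneousSubmodule σ K m)) : ℤ)

/-- The formal power series variable `t`. -/
def t : PowerSeries ℤ := PowerSeries.X

/-- The equidimensional part `U_S(I)` of (a minimal primary decomposition of) `I`:
the intersection of the primary components `I(p)` over the associated primes `p`
with `dim S/p = dim S/I`.  Any such `p` is a minimal prime of `I`, so its primary
component is independent of the decomposition and equals the saturation
`{x | ∃ s ∉ p, s * x ∈ I}`. -/
def USideal {R : Type} [CommRing R] (I : Ideal R) : Ideal R :=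
  sInf {J | ∃ p ∈ associatedPrimes R (R ⧸ I),
    ringKrullDim (R ⧸ p) = ringKrullDim (R ⧸ I) ∧
    J = Ideal.span {x | ∃ s ∉ p, s * x ∈ I}}

/-- `Ext_S^j(S/I, S)`, as an object of `ModuleCat S`.  The `i`-th module of
deficiency of `S/I` is `ω^i(S/I) = Ext_S^{2n-i}(S/I, S)`, i.e. `extSI K I (2*n - i)`. -/
def extSI (K : Type) [Field K] {σ : Type} (I : Ideal (MvPolynomial σ K)) (j : ℕ) :
    ModuleCat (MvPolynomial σ K) :=
  ((Ext (MvPolynomial σ K) (ModuleCat (MvPolynomial σ K)) j).obj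
      (op (ModuleCat.of (MvPolynomial σ K) (MvPolynomial σ K ⧸ I)))).obj
    (ModuleCat.of (MvPolynomial σ K) (MvPolynomial σ K))

/-- The line (path) graph on `[n]` (with `[n]` realized as `Fin n`), with edges
`{i, i+1}` for `1 ≤ i ≤ n-1`. -/
def lineG (n : ℕ) : SimpleGraph (Fin n) :=
  SimpleGraph.fromRel (fun a b => (b : ℕ) = (a : ℕ) + 1)

/-- The cycle of length `n` on `[n]` (with `[n]` realized as `Fin n`), with edges
`{i, i+1}` for `1 ≤ i ≤ n-1` together with `{1, n}`. -/
def cycleG (n : ℕ) : SimpleGraph (Fin n) :=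
  SimpleGraph.fromRel (fun a b =>
    (b : ℕ) = (a : ℕ) + 1 ∨ ((a : ℕ) = 0 ∧ (b : ℕ) = n - 1))

/-- The binomial `g = x_1 y_n - x_n y_1`. -/
def gElt (K : Type) [Field K] {n : ℕ} (hn : 0 < n) : MvPolynomial (Fin n ⊕ Fin n) K :=
  xv K ⟨0, hn⟩ * yv K ⟨n - 1, by omega⟩ - xv K ⟨n - 1, by omega⟩ * yv K ⟨0, hn⟩

/-- The `i`-th generator `x_2 x_3 ⋯ x_i y_{i+1} ⋯ y_{n-1}` (for `i = 1, …, n-1`)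
of the monomial ideal `M`; the product ranges over the labels `p = 2, …, n-1`
(`0`-indexed: `q = p - 1` with `1 ≤ q ≤ n-2`), taking `x_p` when `p ≤ i` and
`y_p` when `p > i`. -/
def mgen (K : Type) [Field K] (n : ℕ) (i : ℕ) : MvPolynomial (Fin n ⊕ Fin n) K :=
  ∏ q ∈ Finset.univ.filter (fun q : Fin n => 0 < (q : ℕ) ∧ (q : ℕ) < n - 1),
    (if (q : ℕ) + 1 ≤ i then xv K q else yv K q)

/-- The monomial ideal
`M = (x_2 x_3 ⋯ x_{n-1}, x_2 x_3 ⋯ x_{n-2} y_{n-1}, …, x_2 y_3 ⋯ y_{n-1}, y_2 y_3 ⋯ y_{n-1})`. -/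
def monoM (K : Type) [Field K] (n : ℕ) : Ideal (MvPolynomial (Fin n ⊕ Fin n) K) :=
  Ideal.span {f | ∃ i : ℕ, 1 ≤ i ∧ i ≤ n - 1 ∧ f = mgen K n i}

/-- The degree of a vertex, as the cardinality of its neighbor set. -/
def deg {n : ℕ} (G : SimpleGraph (Fin n)) (v : Fin n) : ℕ :=
  Nat.card (G.neighborSet v)

/-- A tree is 3-star like if no vertex has degree `≥ 4`, and either there is at most
one vertex of degree `3`, or there are exactly two vertices of degree `3` and they
are joined by an edge. -/
def ThreeStarLike {n : ℕ} (G : SimpleGraph (Fin n)) : Prop :=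
  (∀ v, deg G v ≤ 3) ∧
    ({v | deg G v = 3}.Subsingleton ∨
      ∃ a b : Fin n, a ≠ b ∧ G.Adj a b ∧ {v | deg G v = 3} = {a, b})

/-- The graph `G′` on `[n+1]` obtained from a graph `G` on `[n]` by attaching the
new edge `{v, n+1}` at the vertex `v` of `G`. -/
def extendG {n : ℕ} (G : SimpleGraph (Fin n)) (v : Fin n) : SimpleGraph (Fin (n + 1)) :=
  SimpleGraph.fromRel (fun a b =>
    (∃ (ha : a ≠ Fin.last n) (hb : b ≠ Fin.last n),
      G.Adj (a.castPred ha) (b.castPred hb)) ∨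
    (a = Fin.castSucc v ∧ b = Fin.last n))

/-- The inclusion `S = K[x_1,…,x_n,y_1,…,y_n] → S′ = K[x_1,…,x_{n+1},y_1,…,y_{n+1}]`. -/
def liftS (K : Type) [Field K] (n : ℕ) :
    MvPolynomial (Fin n ⊕ Fin n) K →ₐ[K] MvPolynomial (Fin (n + 1) ⊕ Fin (n + 1)) K :=
  rename (Sum.map Fin.castSucc Fin.castSucc)

section Aux

variable {K : Type} [Field K] {n : ℕ}


variable {K : Type} [Field K] {n : ℕ}

abbrev DD (n : ℕ) := (Fin n ⊕ Fin n) →₀ ℕ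

def xe (i : Fin n) : DD n := Finsupp.single (Sum.inl i) 1
def ye (i : Fin n) : DD n := Finsupp.single (Sum.inr i) 1

def MRel (d₁ d₂ : DD n) : Prop :=
  ∃ (e : DD n) (i j : Fin n), (j : ℕ) = (i : ℕ) + 1 ∧ d₁ = e + xe i + ye j ∧ d₂ = e + xe j + ye i

def Con (d₁ d₂ : DD n) : Prop := Relation.EqvGen MRel d₁ d₂

lemma Con.refl (d : DD n) : Con d d := Relation.EqvGen.refl d
lemma Con.symm {d₁ d₂ : DD n} (h : Con d₁ d₂) : Con d₂ d₁ := Relation.EqvGen.symm _ _ h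
lemma Con.trans {d₁ d₂ d₃ : DD n} (h : Con d₁ d₂) (h' : Con d₂ d₃) : Con d₁ d₃ :=
  Relation.EqvGen.trans _ _ _ h h'
lemma Con.of_mrel {d₁ d₂ : DD n} (h : MRel d₁ d₂) : Con d₁ d₂ := Relation.EqvGen.rel _ _ h

lemma Con.add {d₁ d₂ : DD n} (h : Con d₁ d₂) (w : DD n) : Con (d₁ + w) (d₂ + w) := by
  induction h with
  | rel a b hab =>
    obtain ⟨e, i, j, hij, h1, h2⟩ := hab
    exact Con.of_mrel ⟨e + w, i, j, hij, by rw [h1]; abel, by rw [h2]; abel⟩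
  | refl a => exact Con.refl _
  | symm a b _ ih => exact ih.symm
  | trans a b c _ _ ih1 ih2 => exact ih1.trans ih2

def cF (p : Fin n) (d : DD n) : ℕ := d (Sum.inl p) + d (Sum.inr p)
def aF (d : DD n) : ℕ := ∑ q : Fin n, d (Sum.inl q)
def lF (p : Fin n) (d : DD n) : ℕ := ∑ q : Fin n, if (q : ℕ) < (p : ℕ) then d (Sum.inl q) else 0

@[simp] lemma cF_add (p : Fin n) (d e : DD n) : cF p (d + e) = cF p d + cF p e := by
  simp [cF, Finsupp.add_apply]; ring
@[simp] lemma aF_add (d e : DD n) : aF (d + e) = aF d + aF e := by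
  simp [aF, Finsupp.add_apply, Finset.sum_add_distrib]
@[simp] lemma lF_add (p : Fin n) (d e : DD n) : lF p (d + e) = lF p d + lF p e := by
  simp only [lF, Finsupp.add_apply, ← Finset.sum_add_distrib]
  refine Finset.sum_congr rfl fun q _ => ?_
  split <;> simp

@[simp] lemma cF_xe (p i : Fin n) : cF p (xe i) = if p = i then 1 else 0 := by
  simp [cF, xe, Finsupp.single_apply]
  split <;> simp_all [eq_comm]
@[simp] lemma cF_ye (p i : Fin n) : cF p (ye i) = if p = i then 1 else 0 := by
  simp [cF, ye, Finsupp.single_apply]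
  split <;> simp_all [eq_comm]
@[simp] lemma aF_xe (i : Fin n) : aF (xe i) = 1 := by
  simp [aF, xe, Finsupp.single_apply]
@[simp] lemma aF_ye (i : Fin n) : aF (ye i) = 0 := by
  simp [aF, ye, Finsupp.single_apply]
@[simp] lemma lF_xe (p i : Fin n) : lF p (xe i) = if (i : ℕ) < (p : ℕ) then 1 else 0 := by
  rw [lF]
  rw [Finset.sum_eq_single i]
  · simp [xe, Finsupp.single_apply]
  · intro q _ hq
    simp [xe, Finsupp.single_apply, Ne.symm hq]
  · simp
@[simp] lemma lF_ye (p i : Fin n) : lF p (ye i) = 0 := by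
  rw [lF]
  refine Finset.sum_eq_zero fun q _ => ?_
  simp [ye, Finsupp.single_apply]

-- invariance lemmas
lemma mrel_cF {d₁ d₂ : DD n} (h : MRel d₁ d₂) (p : Fin n) : cF p d₁ = cF p d₂ := by
  obtain ⟨e, i, j, hij, rfl, rfl⟩ := h
  simp; ring

lemma mrel_aF {d₁ d₂ : DD n} (h : MRel d₁ d₂) : aF d₁ = aF d₂ := by
  obtain ⟨e, i, j, hij, rfl, rfl⟩ := h
  simp

lemma mrel_lF {d₁ d₂ : DD n} (h : MRel d₁ d₂) (p : Fin n) (hp : cF p d₁ = 0) :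
    lF p d₁ = lF p d₂ := by
  obtain ⟨e, i, j, hij, rfl, rfl⟩ := h
  simp only [cF_add, cF_xe, cF_ye] at hp
  have hpi : p ≠ i := by intro h; subst h; simp at hp
  have hpj : p ≠ j := by intro h; subst h; simp at hp
  have hvi : (p : ℕ) ≠ (i : ℕ) := fun h => hpi (Fin.ext h)
  have hvj : (p : ℕ) ≠ (j : ℕ) := fun h => hpj (Fin.ext h)
  simp only [lF_add, lF_xe, lF_ye]
  have : ((i : ℕ) < (p : ℕ)) ↔ ((j : ℕ) < (p : ℕ)) := by omega
  simp [this]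

lemma con_cF {d₁ d₂ : DD n} (h : Con d₁ d₂) (p : Fin n) : cF p d₁ = cF p d₂ := by
  induction h with
  | rel a b hab => exact mrel_cF hab p
  | refl a => rfl
  | symm a b _ ih => exact ih.symm
  | trans a b c _ _ ih1 ih2 => exact ih1.trans ih2

lemma con_aF {d₁ d₂ : DD n} (h : Con d₁ d₂) : aF d₁ = aF d₂ := by
  induction h with
  | rel a b hab => exact mrel_aF hab
  | refl a => rfl
  | symm a b _ ih => exact ih.symm
  | trans a b c _ _ ih1 ih2 => exact ih1.trans ih2

lemma con_lF {d₁ d₂ : DD n} (h : Con d₁ d₂) (p : Fin n) (hp : cF p d₁ = 0) :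
    lF p d₁ = lF p d₂ := by
  induction h with
  | rel a b hab => exact mrel_lF hab p hp
  | refl a => rfl
  | symm a b hab ih => exact (ih (by rw [con_cF (show Con a b from hab) p]; exact hp)).symm
  | trans a b c h1 h2 ih1 ih2 => exact (ih1 hp).trans (ih2 ((con_cF h1 p) ▸ hp))
lemma con_congr {u v u' v' : DD n} (h : Con u v) (h1 : u = u') (h2 : v = v') : Con u' v' := by
  subst h1; subst h2; exact h

lemma exists_extract (d : DD n) (s : Fin n ⊕ Fin n) (h : 0 < d s) :
    ∃ d' : DD n, d = d' + Finsupp.single s 1 := by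
  classical
  refine ⟨d - Finsupp.single s 1, ?_⟩
  ext t
  rcases eq_or_ne t s with rfl | hts
  · simp [Finsupp.single_apply]
    omega
  · simp [Finsupp.single_apply, Ne.symm hts]

lemma con_transport : ∀ (gap : ℕ) (dd : DD n) (a b : Fin n),
    (b : ℕ) = (a : ℕ) + gap + 1 →
    (∀ t : Fin n, (a : ℕ) < (t : ℕ) → (t : ℕ) < (b : ℕ) → 0 < cF t dd) →
    Con (dd + xe a + ye b) (dd + xe b + ye a) := by
  intro gap
  induction gap with
  | zero =>
    intro dd a b hb _
    exact Con.of_mrel ⟨dd, a, b, by omega, rfl, rfl⟩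
  | succ m ih =>
    intro dd a b hb hcap
    have hkn : (a : ℕ) + 1 < n := by have := b.isLt; omega
    set k : Fin n := ⟨(a : ℕ) + 1, hkn⟩ with hk
    have hkv : (k : ℕ) = (a : ℕ) + 1 := rfl
    have hck : 0 < cF k dd := hcap k (by omega) (by omega)
    rw [cF] at hck
    by_cases hx : 0 < dd (Sum.inl k)
    · obtain ⟨dd', hdd⟩ := exists_extract dd (Sum.inl k) hx
      rw [show Finsupp.single (Sum.inl k) 1 = (xe k : DD n) from rfl] at hdd
      have step1 : Con (dd' + xe a + xe k + ye b) (dd' + xe a + xe b + ye k) := by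
        have hcap' : ∀ t : Fin n, (k : ℕ) < (t : ℕ) → (t : ℕ) < (b : ℕ) → 0 < cF t (dd' + xe a) := by
          intro t ht1 ht2
          have htk : t ≠ k := by intro h; subst h; omega
          have hta : t ≠ a := by intro h; subst h; omega
          have h3 := hcap t (by omega) ht2
          rw [hdd] at h3
          simp only [cF_add, cF_xe, if_neg htk, if_neg hta] at h3 ⊢
          omega
        have := ih (dd' + xe a) k b (by omega) hcap'
        exact con_congr this (by abel) (by abel)
      have step2 : Con ((dd' + xe b) + xe a + ye k) ((dd' + xe b) + xe k + ye a) :=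
        Con.of_mrel ⟨dd' + xe b, a, k, rfl, rfl, rfl⟩
      exact (con_congr step1 (by rw [hdd]; abel) rfl).trans
        (con_congr step2 (by abel) (by rw [hdd]; abel))
    · have hy : 0 < dd (Sum.inr k) := by omega
      obtain ⟨dd', hdd⟩ := exists_extract dd (Sum.inr k) hy
      rw [show Finsupp.single (Sum.inr k) 1 = (ye k : DD n) from rfl] at hdd
      have step1 : Con ((dd' + ye b) + xe a + ye k) ((dd' + ye b) + xe k + ye a) :=
        Con.of_mrel ⟨dd' + ye b, a, k, rfl, rfl, rfl⟩
      have step2 : Con (dd' + ye a + xe k + ye b) (dd' + ye a + xe b + ye k) := by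
        have hcap' : ∀ t : Fin n, (k : ℕ) < (t : ℕ) → (t : ℕ) < (b : ℕ) → 0 < cF t (dd' + ye a) := by
          intro t ht1 ht2
          have htk : t ≠ k := by intro h; subst h; omega
          have hta : t ≠ a := by intro h; subst h; omega
          have h3 := hcap t (by omega) ht2
          rw [hdd] at h3
          simp only [cF_add, cF_ye, if_neg htk, if_neg hta] at h3 ⊢
          omega
        have := ih (dd' + ye a) k b (by omega) hcap'
        exact con_congr this (by abel) (by abel)
      exact (con_congr step1 (by rw [hdd]; abel) rfl).trans
        (con_congr step2 (by abel) (by rw [hdd]; abel))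
def msr (d₁ d₂ : DD n) : ℕ := ∑ q : Fin n, Nat.dist (d₁ (Sum.inl q)) (d₂ (Sum.inl q))

lemma con_step (d₁ d₂ : DD n) (hc : ∀ p, cF p d₁ = cF p d₂)
    (hl : ∀ p, cF p d₁ = 0 → lF p d₁ = lF p d₂) (ha : aF d₁ = aF d₂)
    (q : Fin n) (hmin : ∀ r : Fin n, (r : ℕ) < (q : ℕ) → d₁ (Sum.inl r) = d₂ (Sum.inl r))
    (hgt : d₂ (Sum.inl q) < d₁ (Sum.inl q)) :
    ∃ d₁', Con d₁ d₁' ∧ msr d₁' d₂ < msr d₁ d₂ := by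
  classical
  set W : Finset (Fin n) := Finset.univ.filter (fun t => (q : ℕ) < (t : ℕ) ∧ cF t d₁ = 0) with hW
  have hWmem : ∀ t : Fin n, t ∈ W ↔ ((q : ℕ) < (t : ℕ) ∧ cF t d₁ = 0) := by
    intro t; rw [hW]; simp
  have hPex : ∃ P : ℕ, (q : ℕ) < P ∧ (∀ t : Fin n, (t : ℕ) < P → (q : ℕ) < (t : ℕ) → 0 < cF t d₁)
      ∧ ((∑ r : Fin n, if (r : ℕ) < P then d₁ (Sum.inl r) else 0)
        = ∑ r : Fin n, if (r : ℕ) < P then d₂ (Sum.inl r) else 0) := by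
    by_cases h : W.Nonempty
    · refine ⟨((W.min' h : Fin n) : ℕ), ?_, ?_, ?_⟩
      · exact ((hWmem _).mp (W.min'_mem h)).1
      · intro t htP htq
        by_contra hz
        have hz0 : cF t d₁ = 0 := by omega
        have htW : t ∈ W := (hWmem t).mpr ⟨htq, hz0⟩
        have hle2 : ((W.min' h : Fin n) : ℕ) ≤ (t : ℕ) := Fin.le_def.mp (W.min'_le t htW)
        omega
      · have hmem := (hWmem _).mp (W.min'_mem h)
        have h2 := hl (W.min' h) hmem.2
        rw [lF, lF] at h2
        exact h2
    · refine ⟨n, q.isLt, fun t htP htq => ?_, ?_⟩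
      · by_contra hz
        exact h ⟨t, (hWmem t).mpr ⟨htq, by omega⟩⟩
      · simp only [Fin.is_lt, if_true]
        rw [aF, aF] at ha
        exact ha
  obtain ⟨P, hPq, hPmin, hsum⟩ := hPex
  have hex : ∃ j : Fin n, ((q : ℕ) < (j : ℕ) ∧ (j : ℕ) < P) ∧
      d₁ (Sum.inl j) < d₂ (Sum.inl j) := by
    by_contra hno
    push_neg at hno
    have hle : ∀ r : Fin n, r ∈ Finset.univ → (if (r : ℕ) < P then d₂ (Sum.inl r) else 0)
        ≤ (if (r : ℕ) < P then d₁ (Sum.inl r) else 0) := by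
      intro r _
      rcases lt_trichotomy (r : ℕ) (q : ℕ) with h1 | h1 | h1
      · rw [hmin r h1]
      · have hrq : r = q := Fin.ext h1
        subst hrq
        simp only [if_pos hPq]
        omega
      · by_cases h2 : (r : ℕ) < P
        · simp only [if_pos h2]
          exact hno r ⟨h1, h2⟩
        · simp only [if_neg h2]; exact le_refl 0
    have hlt := Finset.sum_lt_sum hle ⟨q, Finset.mem_univ q, by simp only [if_pos hPq]; omega⟩
    omega
  obtain ⟨j, ⟨hqj, hjP⟩, hj⟩ := hex
  have hx1 : 0 < d₁ (Sum.inl q) := by omega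
  have hy1 : 0 < d₁ (Sum.inr j) := by
    have hcj := hc j
    rw [cF, cF] at hcj
    omega
  obtain ⟨t1, ht1⟩ := exists_extract d₁ (Sum.inl q) hx1
  have hy1' : 0 < t1 (Sum.inr j) := by
    rw [ht1] at hy1
    simpa [Finsupp.single_apply] using hy1
  obtain ⟨dd, hdd⟩ := exists_extract t1 (Sum.inr j) hy1'
  have hd1 : d₁ = dd + xe q + ye j := by
    rw [ht1, hdd, xe, ye]; abel
  have hcap : ∀ t : Fin n, (q : ℕ) < (t : ℕ) → (t : ℕ) < (j : ℕ) → 0 < cF t dd := by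
    intro t h1 h2
    have h3 := hPmin t (by omega) h1
    rw [hd1] at h3
    have htq : t ≠ q := by intro h; subst h; omega
    have htj : t ≠ j := by intro h; subst h; omega
    simp only [cF_add, cF_xe, cF_ye, if_neg htq, if_neg htj] at h3
    omega
  have hcon : Con d₁ (dd + xe j + ye q) := by
    have := con_transport ((j : ℕ) - (q : ℕ) - 1) dd q j (by omega) hcap
    exact con_congr this hd1.symm rfl
  refine ⟨dd + xe j + ye q, hcon, ?_⟩
  rw [msr, msr]
  have hval : ∀ r : Fin n, (dd + xe j + ye q) (Sum.inl r)
      = dd (Sum.inl r) + (if j = r then 1 else 0) := by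
    intro r
    simp [xe, ye, Finsupp.single_apply, Finsupp.add_apply]
  have hval1 : ∀ r : Fin n, d₁ (Sum.inl r) = dd (Sum.inl r) + (if q = r then 1 else 0) := by
    intro r
    rw [hd1]
    simp [xe, ye, Finsupp.single_apply, Finsupp.add_apply]
  have hqd : d₂ (Sum.inl q) ≤ dd (Sum.inl q) := by
    have h5 := hval1 q
    rw [if_pos rfl] at h5
    omega
  have hjd : dd (Sum.inl j) < d₂ (Sum.inl j) := by
    have h5 := hval1 j
    rw [if_neg (fun h => by subst h; omega : ¬ q = j)] at h5
    omega
  apply Finset.sum_lt_sum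
  · intro r _
    rw [hval r, hval1 r]
    by_cases h1 : q = r
    · subst h1
      have hne : ¬ (j = q) := fun h => by subst h; omega
      rw [if_pos rfl, if_neg hne]
      simp only [Nat.dist]
      omega
    · rw [if_neg h1]
      by_cases h2 : j = r
      · subst h2
        rw [if_pos rfl]
        simp only [Nat.dist]
        omega
      · rw [if_neg h2]
  · refine ⟨q, Finset.mem_univ q, ?_⟩
    rw [hval q, hval1 q]
    have hne : ¬ (j = q) := fun h => by subst h; omega
    rw [if_pos rfl, if_neg hne]
    simp only [Nat.dist]
    omega

lemma msr_comm (u v : DD n) : msr u v = msr v u := by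
  rw [msr, msr]; exact Finset.sum_congr rfl fun r _ => Nat.dist_comm _ _

lemma con_of_inv_aux : ∀ (N : ℕ) (d₁ d₂ : DD n), msr d₁ d₂ = N →
    (∀ p, cF p d₁ = cF p d₂) → aF d₁ = aF d₂ →
    (∀ p, cF p d₁ = 0 → lF p d₁ = lF p d₂) → Con d₁ d₂ := by
  intro N
  induction N using Nat.strong_induction_on with
  | _ N IH =>
    intro d₁ d₂ hN hc ha hl
    by_cases hall : ∀ q : Fin n, d₁ (Sum.inl q) = d₂ (Sum.inl q)
    · have heq : d₁ = d₂ := by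
        ext s
        rcases s with qq | qq
        · exact hall qq
        · have h1 := hc qq
          have h2 := hall qq
          rw [cF, cF] at h1
          omega
      rw [heq]; exact Con.refl _
    · push_neg at hall
      obtain ⟨q0, hq0⟩ := hall
      have hne : (Finset.univ.filter
          (fun r : Fin n => d₁ (Sum.inl r) ≠ d₂ (Sum.inl r))).Nonempty :=
        ⟨q0, by simp [hq0]⟩
      set q := Finset.min' _ hne with hq
      have hqW := Finset.min'_mem _ hne
      rw [Finset.mem_filter] at hqW
      have hqne : d₁ (Sum.inl q) ≠ d₂ (Sum.inl q) := hqW.2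
      have hmin : ∀ r : Fin n, (r : ℕ) < (q : ℕ) → d₁ (Sum.inl r) = d₂ (Sum.inl r) := by
        intro r hr
        by_contra hno
        have hle := Finset.min'_le (Finset.univ.filter
          (fun r : Fin n => d₁ (Sum.inl r) ≠ d₂ (Sum.inl r))) r
          (Finset.mem_filter.mpr ⟨Finset.mem_univ r, hno⟩)
        rw [← hq, Fin.le_def] at hle
        omega
      rcases lt_or_gt_of_ne hqne with hlt | hgt
      · have hc' : ∀ p, cF p d₂ = cF p d₁ := fun p => (hc p).symm
        have hl' : ∀ p, cF p d₂ = 0 → lF p d₂ = lF p d₁ := by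
          intro p hp
          exact (hl p (by rw [hc p]; exact hp)).symm
        obtain ⟨d₂', hcon, hm⟩ := con_step d₂ d₁ hc' hl' ha.symm q
          (fun r hr => (hmin r hr).symm) hlt
        have hrec : Con d₁ d₂' := by
          refine IH (msr d₁ d₂') ?_ d₁ d₂' rfl ?_ ?_ ?_
          · rw [msr_comm d₁ d₂']
            rw [msr_comm d₁ d₂] at hN
            omega
          · intro p; rw [hc p]; exact con_cF hcon p
          · rw [ha]; exact con_aF hcon
          · intro p hp
            rw [hl p hp]; exact con_lF hcon p (by rw [← hc p]; exact hp)
        exact hrec.trans hcon.symm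
      · obtain ⟨d₁', hcon, hm⟩ := con_step d₁ d₂ hc hl ha q hmin hgt
        have hrec : Con d₁' d₂ := by
          refine IH (msr d₁' d₂) (by omega) d₁' d₂ rfl ?_ ?_ ?_
          · intro p; rw [← con_cF hcon p]; exact hc p
          · rw [← con_aF hcon]; exact ha
          · intro p hp
            rw [← con_lF hcon p (by rw [con_cF hcon p]; exact hp)]
            exact hl p (by rw [con_cF hcon p]; exact hp)
        exact hcon.trans hrec
  
lemma con_of_inv (d₁ d₂ : DD n) (hc : ∀ p, cF p d₁ = cF p d₂) (ha : aF d₁ = aF d₂)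
    (hl : ∀ p, cF p d₁ = 0 → lF p d₁ = lF p d₂) : Con d₁ d₂ :=
  con_of_inv_aux (msr d₁ d₂) d₁ d₂ rfl hc ha hl



lemma xv_mul_yv (i j : Fin n) :
    xv K i * yv K j = MvPolynomial.monomial (xe i + ye j) (1 : K) := by
  rw [xv, yv, MvPolynomial.X, MvPolynomial.X, MvPolynomial.monomial_mul, one_mul]
  rfl

lemma mono_mul_mono (a b : DD n) (c : K) :
    MvPolynomial.monomial a c * MvPolynomial.monomial b (1 : K)
      = MvPolynomial.monomial (a + b) c := by
  rw [MvPolynomial.monomial_mul, mul_one]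

lemma gen_mem_bei {i j : Fin n} (hij : (j : ℕ) = (i : ℕ) + 1) :
    xv K i * yv K j - xv K j * yv K i ∈ bei K (lineG n) := by
  apply Ideal.subset_span
  refine ⟨i, j, ?_, ?_, rfl⟩
  · rw [Fin.lt_def]; omega
  · rw [lineG, SimpleGraph.fromRel_adj]
    exact ⟨by intro h; subst h; omega, Or.inl hij⟩

lemma diff_mem_of_mrel {d₁ d₂ : DD n} (h : MRel d₁ d₂) :
    MvPolynomial.monomial d₁ (1 : K) - MvPolynomial.monomial d₂ 1 ∈ bei K (lineG n) := by
  obtain ⟨e, i, j, hij, rfl, rfl⟩ := h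
  have key : MvPolynomial.monomial (e + xe i + ye j) (1 : K)
      - MvPolynomial.monomial (e + xe j + ye i) 1
      = MvPolynomial.monomial e 1 * (xv K i * yv K j - xv K j * yv K i) := by
    rw [mul_sub, xv_mul_yv, xv_mul_yv, mono_mul_mono, mono_mul_mono]
    congr 2 <;> abel
  rw [key]
  exact Ideal.mul_mem_left _ _ (gen_mem_bei hij)

lemma diff_mem_of_con {d₁ d₂ : DD n} (h : Con d₁ d₂) :
    MvPolynomial.monomial d₁ (1 : K) - MvPolynomial.monomial d₂ 1 ∈ bei K (lineG n) := by
  induction h with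
  | rel a b hab => exact diff_mem_of_mrel hab
  | refl a => simp
  | symm a b _ ih => have := (bei K (lineG n)).neg_mem ih; simpa using this
  | trans a b c _ _ ih1 ih2 =>
    have := (bei K (lineG n)).add_mem ih1 ih2
    simpa using this

open Classical in
noncomputable def SP (P : DD n → Prop) (f : MvPolynomial (Fin n ⊕ Fin n) K) : K :=
  ∑ d ∈ f.support, if P d then f.coeff d else 0

open Classical

lemma SP_superset (P : DD n → Prop) (f : MvPolynomial (Fin n ⊕ Fin n) K)
    {S : Finset (DD n)} (hS : f.support ⊆ S) :
    SP P f = ∑ d ∈ S, if P d then f.coeff d else 0 := by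
  rw [SP]
  apply Finset.sum_subset hS
  intro d _ hd
  rw [MvPolynomial.notMem_support_iff.mp hd]
  simp

lemma SP_zero (P : DD n → Prop) : SP P (0 : MvPolynomial (Fin n ⊕ Fin n) K) = 0 := by
  simp [SP]

lemma SP_add (P : DD n → Prop) (f g : MvPolynomial (Fin n ⊕ Fin n) K) :
    SP P (f + g) = SP P f + SP P g := by
  rw [SP_superset P (f + g) (MvPolynomial.support_add),
    SP_superset P f (Finset.subset_union_left (s₂ := g.support)),
    SP_superset P g (Finset.subset_union_right (s₁ := f.support)),
    ← Finset.sum_add_distrib]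
  refine Finset.sum_congr rfl fun d _ => ?_
  rw [MvPolynomial.coeff_add]
  split <;> simp

lemma SP_monomial (P : DD n → Prop) (d : DD n) (c : K) :
    SP P (MvPolynomial.monomial d c) = if P d then c else 0 := by
  rcases eq_or_ne c 0 with rfl | hc
  · simp [SP]
  · rw [SP, MvPolynomial.support_monomial, if_neg hc, Finset.sum_singleton,
      MvPolynomial.coeff_monomial, if_pos rfl]

lemma SP_neg (P : DD n → Prop) (f : MvPolynomial (Fin n ⊕ Fin n) K) :
    SP P (-f) = - SP P f := by
  rw [SP, SP, MvPolynomial.support_neg, ← Finset.sum_neg_distrib]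
  refine Finset.sum_congr rfl fun d _ => ?_
  rw [MvPolynomial.coeff_neg]
  split <;> simp

lemma SP_sub (P : DD n → Prop) (f g : MvPolynomial (Fin n ⊕ Fin n) K) :
    SP P (f - g) = SP P f - SP P g := by
  rw [sub_eq_add_neg, SP_add, SP_neg]; ring

lemma SP_finset_sum (P : DD n → Prop) {α : Type} (s : Finset α)
    (F : α → MvPolynomial (Fin n ⊕ Fin n) K) :
    SP P (∑ i ∈ s, F i) = ∑ i ∈ s, SP P (F i) := by
  induction s using Finset.cons_induction with
  | empty => simp [SP_zero]
  | cons a s ha ih => rw [Finset.sum_cons, Finset.sum_cons, SP_add, ih]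

lemma SP_mul_gen (P : DD n → Prop)
    (hP : ∀ d₁ d₂ : DD n, MRel d₁ d₂ → (P d₁ ↔ P d₂))
    (r : MvPolynomial (Fin n ⊕ Fin n) K) {i j : Fin n} (hij : (j : ℕ) = (i : ℕ) + 1) :
    SP P (r * (xv K i * yv K j - xv K j * yv K i)) = 0 := by
  conv_lhs => rw [MvPolynomial.as_sum r]
  rw [Finset.sum_mul, SP_finset_sum]
  refine Finset.sum_eq_zero fun w _ => ?_
  rw [mul_sub, xv_mul_yv, xv_mul_yv, mono_mul_mono, mono_mul_mono, SP_sub,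
    SP_monomial, SP_monomial]
  have hrel : MRel (w + (xe i + ye j)) (w + (xe j + ye i)) :=
    ⟨w, i, j, hij, by abel, by abel⟩
  rw [if_congr (hP _ _ hrel) rfl rfl]
  ring

lemma SP_eq_zero_of_mem (P : DD n → Prop)
    (hP : ∀ d₁ d₂ : DD n, MRel d₁ d₂ → (P d₁ ↔ P d₂))
    {f : MvPolynomial (Fin n ⊕ Fin n) K} (hf : f ∈ bei K (lineG n)) : SP P f = 0 := by
  have main : ∀ r : MvPolynomial (Fin n ⊕ Fin n) K, SP P (r * f) = 0 := by
    rw [bei] at hf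
    induction hf using Submodule.span_induction with
    | mem x hx =>
      obtain ⟨i, j, hij, hadj, rfl⟩ := hx
      rw [lineG, SimpleGraph.fromRel_adj] at hadj
      have hij' : (j : ℕ) = (i : ℕ) + 1 := by
        rcases hadj.2 with h | h
        · exact h
        · rw [Fin.lt_def] at hij; omega
      intro r
      exact SP_mul_gen P hP r hij'
    | zero => intro r; rw [mul_zero]; exact SP_zero P
    | add x y hx hy ihx ihy =>
      intro r
      rw [mul_add, SP_add, ihx r, ihy r]
      ring
    | smul a x hx ih =>
      intro r
      rw [smul_eq_mul, ← mul_assoc]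
      exact ih (r * a)
  have := main 1
  rwa [one_mul] at this

lemma mem_of_SP_eq_zero :
    ∀ (NN : ℕ) (f : MvPolynomial (Fin n ⊕ Fin n) K), f.support.card = NN →
    (∀ d₀ ∈ f.support, SP (fun d => Con d d₀) f = 0) → f ∈ bei K (lineG n) := by
  intro NN
  induction NN using Nat.strong_induction_on with
  | _ NN IH =>
    intro f hcard hall
    rcases Finset.eq_empty_or_nonempty f.support with hemp | ⟨d₀, hd₀⟩
    · have hf0 : f = 0 := by
        ext d
        rw [MvPolynomial.coeff_zero]
        by_contra hc
        exact absurd (MvPolynomial.mem_support_iff.mpr hc) (by rw [hemp]; simp)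
      rw [hf0]; exact Ideal.zero_mem _
    · set A : MvPolynomial (Fin n ⊕ Fin n) K :=
        ∑ d ∈ f.support, if Con d d₀ then MvPolynomial.monomial d (f.coeff d) else 0 with hA
      have hAmem : A ∈ bei K (lineG n) := by
        have hh₁mem : (∑ d ∈ f.support, if Con d d₀ then
            (MvPolynomial.monomial d (f.coeff d) - MvPolynomial.monomial d₀ (f.coeff d))
            else 0) ∈ bei K (lineG n) := by
          refine Ideal.sum_mem _ fun d _ => ?_
          split
          · rename_i hcon
            have h1 := diff_mem_of_con (K := K) hcon
            have h2 := Ideal.mul_mem_left (bei K (lineG n)) (MvPolynomial.C (f.coeff d)) h1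
            rw [mul_sub, MvPolynomial.C_mul_monomial, MvPolynomial.C_mul_monomial] at h2
            simpa using h2
          · exact Ideal.zero_mem _
        have hsplit : (∑ d ∈ f.support, if Con d d₀ then
            (MvPolynomial.monomial d (f.coeff d) - MvPolynomial.monomial d₀ (f.coeff d))
            else 0)
            = A - MvPolynomial.monomial d₀ (SP (fun d => Con d d₀) f) := by
          have hmap : (MvPolynomial.monomial (R := K) (σ := Fin n ⊕ Fin n) d₀)
              (∑ d ∈ f.support, if Con d d₀ then f.coeff d else 0)
              = ∑ d ∈ f.support, if Con d d₀ then MvPolynomial.monomial d₀ (f.coeff d) else 0 := by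
            rw [map_sum]
            refine Finset.sum_congr rfl fun d _ => ?_
            split <;> simp
          rw [hA, SP, hmap, ← Finset.sum_sub_distrib]
          refine Finset.sum_congr rfl fun d _ => ?_
          split <;> simp
        rw [hsplit, hall d₀ hd₀] at hh₁mem
        simpa using hh₁mem
      have hAcoeff : ∀ d, A.coeff d = if Con d d₀ then f.coeff d else 0 := by
        intro d
        rw [hA, MvPolynomial.coeff_sum]
        by_cases hdf : d ∈ f.support
        · rw [Finset.sum_eq_single d]
          · split
            · rw [MvPolynomial.coeff_monomial, if_pos rfl]
            · rw [MvPolynomial.coeff_zero]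
          · intro b _ hbd
            split
            · rw [MvPolynomial.coeff_monomial, if_neg hbd]
            · rw [MvPolynomial.coeff_zero]
          · intro habs; exact absurd hdf habs
        · have hf0 : f.coeff d = 0 := MvPolynomial.notMem_support_iff.mp hdf
          rw [hf0]
          have hz : ∀ b ∈ f.support,
              (if Con b d₀ then MvPolynomial.monomial b (f.coeff b) else 0).coeff d = 0 := by
            intro b hb
            split
            · rw [MvPolynomial.coeff_monomial, if_neg (by rintro rfl; exact hdf hb)]
            · rw [MvPolynomial.coeff_zero]
          rw [Finset.sum_eq_zero hz]
          split <;> rfl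
      set f₂ : MvPolynomial (Fin n ⊕ Fin n) K := f - A with hf₂
      have hf₂coeff : ∀ d, f₂.coeff d = if Con d d₀ then 0 else f.coeff d := by
        intro d
        rw [hf₂, MvPolynomial.coeff_sub, hAcoeff d]
        split <;> ring
      have hsub : f₂.support ⊆ f.support.erase d₀ := by
        intro d hdm
        rw [MvPolynomial.mem_support_iff, hf₂coeff d] at hdm
        have hncon : ¬ Con d d₀ := by intro hc; rw [if_pos hc] at hdm; exact hdm rfl
        rw [if_neg hncon] at hdm
        refine Finset.mem_erase.mpr ⟨?_, MvPolynomial.mem_support_iff.mpr hdm⟩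
        intro hdd₀; exact hncon (hdd₀ ▸ Con.refl d)
      have hlt : f₂.support.card < NN := by
        have h1 := Finset.card_le_card hsub
        have h2 : (f.support.erase d₀).card < f.support.card :=
          Finset.card_erase_lt_of_mem hd₀
        omega
      have hall₂ : ∀ d₁ ∈ f₂.support, SP (fun d => Con d d₁) f₂ = 0 := by
        intro d₁ hd₁
        have hd₁f : d₁ ∈ f.support := Finset.mem_of_mem_erase (hsub hd₁)
        have hncon₁ : ¬ Con d₁ d₀ := by
          intro hc
          rw [MvPolynomial.mem_support_iff, hf₂coeff d₁, if_pos hc] at hd₁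
          exact hd₁ rfl
        have h9 : SP (fun d => Con d d₁) f₂ = SP (fun d => Con d d₁) f := by
          rw [SP_superset _ f₂ (hsub.trans (Finset.erase_subset _ _)), SP]
          refine Finset.sum_congr rfl fun d _ => ?_
          by_cases hcd : Con d d₁
          · rw [if_pos hcd, if_pos hcd, hf₂coeff d,
              if_neg (fun hc0 => hncon₁ ((hcd.symm).trans hc0))]
          · rw [if_neg hcd, if_neg hcd]
        rw [h9]
        exact hall d₁ hd₁f
      have hf₂mem : f₂ ∈ bei K (lineG n) := IH f₂.support.card (by omega) f₂ rfl hall₂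
      have : f = f₂ + A := by rw [hf₂]; ring
      rw [this]
      exact Ideal.add_mem _ hf₂mem hAmem

lemma SP_congr (P Q : DD n → Prop) (h : ∀ d, P d ↔ Q d) (f : MvPolynomial (Fin n ⊕ Fin n) K) :
    SP P f = SP Q f := by
  rw [SP, SP]
  exact Finset.sum_congr rfl fun d _ => if_congr (h d) rfl rfl

lemma SP_mul_monomial (P : DD n → Prop) (f : MvPolynomial (Fin n ⊕ Fin n) K) (w : DD n) :
    SP P (f * MvPolynomial.monomial w 1) = SP (fun d => P (d + w)) f := by
  conv_lhs => rw [MvPolynomial.as_sum f]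
  rw [Finset.sum_mul, SP_finset_sum, SP]
  refine Finset.sum_congr rfl fun d _ => ?_
  rw [mono_mul_mono, SP_monomial]

lemma lF_le_aF (p : Fin n) (d : DD n) : lF p d ≤ aF d := by
  rw [lF, aF]
  refine Finset.sum_le_sum fun q _ => ?_
  split
  · exact le_refl _
  · exact Nat.zero_le _

lemma lF_of_val_zero (p : Fin n) (hp : (p : ℕ) = 0) (d : DD n) : lF p d = 0 := by
  rw [lF]
  refine Finset.sum_eq_zero fun q _ => ?_
  rw [if_neg (by omega)]

lemma lF_eq_aF (p : Fin n) (d : DD n)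
    (h : ∀ q : Fin n, ¬((q : ℕ) < (p : ℕ)) → d (Sum.inl q) = 0) : lF p d = aF d := by
  rw [lF, aF]
  refine Finset.sum_congr rfl fun q _ => ?_
  by_cases hq : (q : ℕ) < (p : ℕ)
  · rw [if_pos hq]
  · rw [if_neg hq, h q hq]

def IVm (d₀ : DD n) (k : ℕ) (d : DD n) : Prop :=
  (∀ p, cF p d = cF p d₀) ∧ aF d = aF d₀ ∧
  ∀ p : Fin n, 0 < (p : ℕ) → (p : ℕ) < n - 1 → cF p d₀ = 0 → lF p d = lF p d₀ + k

lemma con_iff_IVm (d₀ d : DD n) : Con d d₀ ↔ IVm d₀ 0 d := by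
  constructor
  · intro h
    refine ⟨con_cF h, con_aF h, fun p _ _ hp => ?_⟩
    rw [add_zero]
    exact con_lF h p (by rw [con_cF h p]; exact hp)
  · rintro ⟨hc, ha, hl⟩
    refine con_of_inv d d₀ hc ha fun p hp => ?_
    have hp₀ : cF p d₀ = 0 := by rw [← hc p]; exact hp
    rcases Nat.lt_trichotomy 0 (p : ℕ) with h1 | h1 | h1
    · by_cases h2 : (p : ℕ) < n - 1
      · have := hl p h1 h2 hp₀
        omega
      · have hq0 : ∀ q : Fin n, ¬((q : ℕ) < (p : ℕ)) → d (Sum.inl q) = 0 := by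
          intro q hq
          have hqp : q = p := Fin.ext (by have := q.isLt; have := p.isLt; omega)
          subst hqp
          rw [cF] at hp; omega
        have hq0' : ∀ q : Fin n, ¬((q : ℕ) < (p : ℕ)) → d₀ (Sum.inl q) = 0 := by
          intro q hq
          have hqp : q = p := Fin.ext (by have := q.isLt; have := p.isLt; omega)
          subst hqp
          rw [cF] at hp₀; omega
        rw [lF_eq_aF p d hq0, lF_eq_aF p d₀ hq0', ha]
    · rw [lF_of_val_zero p h1.symm, lF_of_val_zero p h1.symm]
    · omega

lemma cF_swap (z l p : Fin n) : cF p ((xe l + ye z) : DD n) = cF p ((xe z + ye l) : DD n) := by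
  simp only [cF_add, cF_xe, cF_ye]
  omega

lemma IVm_step (z l : Fin n) (hz : (z : ℕ) = 0) (hl : (l : ℕ) = n - 1) (hn : 3 ≤ n)
    (f : MvPolynomial (Fin n ⊕ Fin n) K)
    (hg : f * (xv K z * yv K l - xv K l * yv K z) ∈ bei K (lineG n))
    (d₀ : DD n) (k : ℕ) : SP (IVm d₀ k) f = SP (IVm d₀ (k + 1)) f := by
  set P' : DD n → Prop := fun e =>
    (∀ p, cF p e = cF p d₀ + cF p ((xe z + ye l) : DD n)) ∧ aF e = aF d₀ + 1 ∧
    ∀ p : Fin n, 0 < (p : ℕ) → (p : ℕ) < n - 1 → cF p d₀ = 0 → lF p e = lF p d₀ + (k + 1)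
    with hP'
  have hP'closed : ∀ d₁ d₂ : DD n, MRel d₁ d₂ → (P' d₁ ↔ P' d₂) := by
    have main : ∀ d₁ d₂ : DD n, (∀ p, cF p d₁ = cF p d₂) → aF d₁ = aF d₂ →
        (∀ p, cF p d₁ = 0 → lF p d₁ = lF p d₂) → P' d₁ → P' d₂ := by
      rintro d₁ d₂ hcf haf hlf ⟨h1, h2, h3⟩
      refine ⟨fun p => by rw [← hcf p]; exact h1 p, by rw [← haf]; exact h2, ?_⟩
      intro p hp1 hp2 hp3
      have hc1 : cF p d₁ = 0 := by
        rw [h1 p, hp3]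
        simp only [cF_add, cF_xe, cF_ye]
        have : p ≠ z := fun h => by subst h; omega
        have : p ≠ l := fun h => by subst h; omega
        simp_all
      rw [← hlf p hc1]
      exact h3 p hp1 hp2 hp3
    intro d₁ d₂ hrel
    constructor
    · exact main d₁ d₂ (mrel_cF hrel) (mrel_aF hrel) (fun p => mrel_lF hrel p)
    · refine main d₂ d₁ (fun p => (mrel_cF hrel p).symm) (mrel_aF hrel).symm ?_
      intro p hp
      exact (mrel_lF hrel p (by rw [mrel_cF hrel p]; exact hp)).symm
  have h0 : SP P' (f * (xv K z * yv K l - xv K l * yv K z)) = 0 :=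
    SP_eq_zero_of_mem P' hP'closed hg
  rw [mul_sub, xv_mul_yv, xv_mul_yv, SP_sub, SP_mul_monomial, SP_mul_monomial] at h0
  have e1 : SP (fun d => P' (d + (xe z + ye l))) f = SP (IVm d₀ k) f := by
    refine SP_congr _ _ (fun d => ?_) f
    rw [hP', IVm]
    constructor
    · rintro ⟨h1, h2, h3⟩
      refine ⟨fun p => by have := h1 p; rw [cF_add] at this; omega, ?_, ?_⟩
      · have := h2
        rw [aF_add, aF_add, aF_xe, aF_ye] at this
        omega
      · intro p hp1 hp2 hp3
        have := h3 p hp1 hp2 hp3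
        rw [lF_add, lF_add, lF_xe, lF_ye, if_pos (by omega)] at this
        omega
    · rintro ⟨h1, h2, h3⟩
      refine ⟨fun p => by rw [cF_add, h1 p], ?_, ?_⟩
      · rw [aF_add, aF_add, aF_xe, aF_ye, h2]
      · intro p hp1 hp2 hp3
        rw [lF_add, lF_add, lF_xe, lF_ye, if_pos (by omega), h3 p hp1 hp2 hp3]
        omega
  have e2 : SP (fun d => P' (d + (xe l + ye z))) f = SP (IVm d₀ (k + 1)) f := by
    refine SP_congr _ _ (fun d => ?_) f
    rw [hP', IVm]
    constructor
    · rintro ⟨h1, h2, h3⟩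
      refine ⟨fun p => by have := h1 p; rw [cF_add, cF_swap] at this; omega, ?_, ?_⟩
      · have := h2
        rw [aF_add, aF_add, aF_xe, aF_ye] at this
        omega
      · intro p hp1 hp2 hp3
        have := h3 p hp1 hp2 hp3
        rw [lF_add, lF_add, lF_xe, lF_ye, if_neg (by omega)] at this
        omega
    · rintro ⟨h1, h2, h3⟩
      refine ⟨fun p => by rw [cF_add, cF_swap, h1 p], ?_, ?_⟩
      · rw [aF_add, aF_add, aF_xe, aF_ye, h2]
      · intro p hp1 hp2 hp3
        rw [lF_add, lF_add, lF_xe, lF_ye, if_neg (by omega)]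
        have := h3 p hp1 hp2 hp3
        omega
  rw [e1, e2] at h0
  linear_combination h0

lemma IVm_top (d₀ : DD n) (p₀ : Fin n) (hp₀1 : 0 < (p₀ : ℕ)) (hp₀2 : (p₀ : ℕ) < n - 1)
    (hp₀c : cF p₀ d₀ = 0) (f : MvPolynomial (Fin n ⊕ Fin n) K) :
    SP (IVm d₀ (aF d₀ + 1)) f = 0 := by
  rw [SP]
  refine Finset.sum_eq_zero fun d _ => ?_
  rw [if_neg]
  rintro ⟨hc, ha, hl⟩
  have h1 := hl p₀ hp₀1 hp₀2 hp₀c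
  have h2 := lF_le_aF p₀ d
  omega

lemma key_incomplete (z l : Fin n) (hz : (z : ℕ) = 0) (hl : (l : ℕ) = n - 1) (hn : 3 ≤ n)
    (f : MvPolynomial (Fin n ⊕ Fin n) K)
    (hg : f * (xv K z * yv K l - xv K l * yv K z) ∈ bei K (lineG n))
    (hinc : ∀ d ∈ f.support, ∃ p : Fin n, 0 < (p : ℕ) ∧ (p : ℕ) < n - 1 ∧ cF p d = 0) :
    f ∈ bei K (lineG n) := by
  apply mem_of_SP_eq_zero f.support.card f rfl
  intro d₀ hd₀
  obtain ⟨p₀, hp₀1, hp₀2, hp₀c⟩ := hinc d₀ hd₀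
  have hchain : ∀ k : ℕ, SP (IVm d₀ 0) f = SP (IVm d₀ k) f := by
    intro k
    induction k with
    | zero => rfl
    | succ m ih => rw [ih]; exact IVm_step z l hz hl hn f hg d₀ m
  have h1 : SP (fun d => Con d d₀) f = SP (IVm d₀ 0) f :=
    SP_congr _ _ (fun d => con_iff_IVm d₀ d) f
  rw [h1, hchain (aF d₀ + 1), IVm_top d₀ p₀ hp₀1 hp₀2 hp₀c f]



def intF (n : ℕ) : Finset (Fin n) :=
  Finset.univ.filter (fun q : Fin n => 0 < (q : ℕ) ∧ (q : ℕ) < n - 1)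

open Classical in
noncomputable def dvec (cnd : Fin n → Prop) : DD n :=
  ∑ q ∈ intF n, if cnd q then xe q else ye q

lemma prod_monomial {α : Type} (s : Finset α) (g : α → DD n) :
    (∏ q ∈ s, MvPolynomial.monomial (g q) (1 : K)) = MvPolynomial.monomial (∑ q ∈ s, g q) 1 := by
  induction s using Finset.cons_induction with
  | empty => simp
  | cons a s ha ih =>
    rw [Finset.prod_cons, Finset.sum_cons, ih]
    rw [MvPolynomial.monomial_mul, one_mul]

lemma xv_eq_monomial (i : Fin n) : xv K i = MvPolynomial.monomial (xe i) 1 := rfl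
lemma yv_eq_monomial (i : Fin n) : yv K i = MvPolynomial.monomial (ye i) 1 := rfl

open Classical in
lemma mgen_eq (i : ℕ) : mgen K n i
    = MvPolynomial.monomial (dvec (fun q : Fin n => (q : ℕ) + 1 ≤ i)) 1 := by
  rw [mgen, dvec]
  rw [← prod_monomial]
  refine Finset.prod_congr rfl fun q _ => ?_
  split
  · exact xv_eq_monomial q
  · exact yv_eq_monomial q

open Classical in
lemma cF_dvec (cnd : Fin n → Prop) (p : Fin n) :
    cF p (dvec cnd) = if p ∈ intF n then 1 else 0 := by
  rw [dvec]
  have hadd : ∀ (s : Finset (Fin n)), cF p (∑ q ∈ s, if cnd q then xe q else ye q)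
      = ∑ q ∈ s, cF p (if cnd q then xe q else ye q) := by
    intro s
    induction s using Finset.cons_induction with
    | empty => simp [cF]
    | cons a s ha ih => rw [Finset.sum_cons, Finset.sum_cons, cF_add, ih]
  rw [hadd]
  have hterm : ∀ q : Fin n, cF p (if cnd q then xe q else ye q) = if p = q then 1 else 0 := by
    intro q
    split
    · exact cF_xe p q
    · exact cF_ye p q
  rw [Finset.sum_congr rfl (fun q _ => hterm q)]
  exact Finset.sum_ite_eq (intF n) p (fun _ => 1)

open Classical in
lemma aF_dvec (cnd : Fin n → Prop) :
    aF (dvec cnd) = ((intF n).filter cnd).card := by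
  rw [dvec]
  have hadd : ∀ (s : Finset (Fin n)), aF (∑ q ∈ s, if cnd q then xe q else ye q)
      = ∑ q ∈ s, aF (if cnd q then xe q else ye q) := by
    intro s
    induction s using Finset.cons_induction with
    | empty => simp [aF]
    | cons a s ha ih => rw [Finset.sum_cons, Finset.sum_cons, aF_add, ih]
  rw [hadd]
  have hterm : ∀ q : Fin n, aF ((if cnd q then xe q else ye q : DD n)) = if cnd q then 1 else 0 := by
    intro q
    split
    · exact aF_xe q
    · exact aF_ye q
  rw [Finset.sum_congr rfl (fun q _ => hterm q), Finset.sum_ite, Finset.sum_const,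
    Finset.sum_const]
  simp

lemma apply_inl_le_cF (d : DD n) (p : Fin n) : d (Sum.inl p) ≤ cF p d := Nat.le_add_right _ _
lemma apply_inr_le_cF (d : DD n) (p : Fin n) : d (Sum.inr p) ≤ cF p d := Nat.le_add_left _ _

open Classical in
lemma count_interior' (hn : 3 ≤ n) (t : ℕ) (ht : t ≤ n - 2) (P : Fin n → Prop)
    (hP : ∀ q : Fin n, P q ↔ (q : ℕ) + 1 ≤ t + 1) :
    ((intF n).filter P).card = t := by
  apply Finset.card_eq_of_bijective (fun m hm => (⟨m + 1, by omega⟩ : Fin n))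
  · intro a ha
    rw [Finset.mem_filter, intF, Finset.mem_filter] at ha
    obtain ⟨⟨_, ha1, ha2⟩, ha3⟩ := ha
    rw [hP] at ha3
    refine ⟨(a : ℕ) - 1, by omega, ?_⟩
    apply Fin.ext
    simp
    omega
  · intro m hm
    rw [Finset.mem_filter, intF, Finset.mem_filter, hP]
    refine ⟨⟨Finset.mem_univ _, ?_, ?_⟩, ?_⟩ <;> simp <;> omega
  · intro i j hi hj hij
    have := Fin.val_eq_of_eq hij
    simp at this
    omega

lemma card_intF (hn : 3 ≤ n) : (intF n).card = n - 2 := by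
  apply Finset.card_eq_of_bijective (fun m hm => (⟨m + 1, by omega⟩ : Fin n))
  · intro a ha
    rw [intF, Finset.mem_filter] at ha
    obtain ⟨_, ha1, ha2⟩ := ha
    refine ⟨(a : ℕ) - 1, by omega, ?_⟩
    apply Fin.ext
    simp
    omega
  · intro m hm
    rw [intF, Finset.mem_filter]
    refine ⟨Finset.mem_univ _, ?_, ?_⟩ <;> simp <;> omega
  · intro i j hi hj hij
    have := Fin.val_eq_of_eq hij
    simp at this
    omega
lemma mono_mul_g_mem (z l : Fin n) (hz : (z : ℕ) = 0) (hl : (l : ℕ) = n - 1) (hn : 3 ≤ n)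
    (d : DD n) (hcomp : ∀ q : Fin n, 0 < (q : ℕ) → (q : ℕ) < n - 1 → 0 < cF q d) :
    MvPolynomial.monomial d (1 : K) * (xv K z * yv K l - xv K l * yv K z)
      ∈ bei K (lineG n) := by
  rw [mul_sub, xv_mul_yv, xv_mul_yv, mono_mul_mono, mono_mul_mono,
    ← add_assoc, ← add_assoc]
  apply diff_mem_of_con
  exact con_transport ((l : ℕ) - (z : ℕ) - 1) d z l (by omega)
    (fun t h1 h2 => hcomp t (by omega) (by omega))

open Classical in
lemma dvec_complete (cnd : Fin n → Prop) (q : Fin n) (h1 : 0 < (q : ℕ)) (h2 : (q : ℕ) < n - 1) :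
    0 < cF q (dvec cnd) := by
  rw [cF_dvec, if_pos (by rw [intF, Finset.mem_filter]; exact ⟨Finset.mem_univ _, h1, h2⟩)]
  omega

open Classical in
lemma con_dvec_dvec (hn : 3 ≤ n) (cnd cnd' : Fin n → Prop)
    (haF : aF (dvec cnd) = aF (dvec cnd')) :
    Con (dvec cnd) (dvec cnd') := by
  apply con_of_inv
  · intro p; rw [cF_dvec, cF_dvec]
  · exact haF
  · intro p hp
    rw [cF_dvec] at hp
    have hpn : p ∉ intF n := by
      intro hmem; rw [if_pos hmem] at hp; omega
    rw [intF, Finset.mem_filter] at hpn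
    push_neg at hpn
    have hpval := hpn (Finset.mem_univ p)
    by_cases h0 : (p : ℕ) = 0
    · rw [lF_of_val_zero p h0, lF_of_val_zero p h0]
    · have hnp : (p : ℕ) = n - 1 := by have := p.isLt; omega
      have hz : ∀ (c : Fin n → Prop) (q : Fin n), ¬((q : ℕ) < (p : ℕ)) →
          (dvec c) (Sum.inl q) = 0 := by
        intro c q hq
        have h3 := apply_inl_le_cF (dvec c) q
        rw [cF_dvec] at h3
        have hqn : q ∉ intF n := by
          rw [intF, Finset.mem_filter]
          rintro ⟨_, _, hlt⟩
          omega
        rw [if_neg hqn] at h3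
        omega
      rw [lF_eq_aF p _ (hz cnd), lF_eq_aF p _ (hz cnd')]
      exact haF

open Classical in
lemma dvec_apply_inl (c : Fin n → Prop) (t : Fin n) :
    (dvec c) (Sum.inl t) = if t ∈ intF n ∧ c t then 1 else 0 := by
  rw [dvec, Finsupp.finset_sum_apply]
  by_cases ht : t ∈ intF n
  · rw [Finset.sum_eq_single t]
    · split
      · rename_i hct
        rw [xe, Finsupp.single_apply, if_pos rfl, if_pos ⟨ht, hct⟩]
      · rename_i hct
        rw [ye, Finsupp.single_apply, if_neg (fun h : t ∈ intF n ∧ c t => hct h.2)]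
        simp
    · intro b _ hbt
      split
      · rw [xe, Finsupp.single_apply, if_neg (by simpa using hbt)]
      · rw [ye, Finsupp.single_apply]
        simp
    · intro h; exact absurd ht h
  · rw [Finset.sum_eq_zero, if_neg (fun h => ht h.1)]
    intro b hb
    have hbt : b ≠ t := fun h => ht (h ▸ hb)
    split
    · rw [xe, Finsupp.single_apply, if_neg (by simpa using hbt)]
    · rw [ye, Finsupp.single_apply]
      simp

open Classical in
lemma dvec_apply_inr (c : Fin n → Prop) (t : Fin n) :
    (dvec c) (Sum.inr t) = if t ∈ intF n ∧ ¬ c t then 1 else 0 := by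
  rw [dvec, Finsupp.finset_sum_apply]
  by_cases ht : t ∈ intF n
  · rw [Finset.sum_eq_single t]
    · split
      · rename_i hct
        rw [xe, Finsupp.single_apply, if_neg (fun h : t ∈ intF n ∧ ¬ c t => h.2 hct)]
        simp
      · rename_i hct
        rw [ye, Finsupp.single_apply, if_pos rfl, if_pos ⟨ht, hct⟩]
    · intro b _ hbt
      split
      · rw [xe, Finsupp.single_apply]
        simp
      · rw [ye, Finsupp.single_apply, if_neg (by simpa using hbt)]
    · intro h; exact absurd ht h
  · rw [Finset.sum_eq_zero, if_neg (fun h => ht h.1)]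
    intro b hb
    have hbt : b ≠ t := fun h => ht (h ▸ hb)
    split
    · rw [xe, Finsupp.single_apply]
      simp
    · rw [ye, Finsupp.single_apply, if_neg (by simpa using hbt)]

open Classical in
lemma complete_mono_mem (hn : 3 ≤ n) (d : DD n)
    (hcomp : ∀ q : Fin n, 0 < (q : ℕ) → (q : ℕ) < n - 1 → 0 < cF q d) :
    MvPolynomial.monomial d (1 : K) ∈ bei K (lineG n) ⊔ monoM K n := by
  obtain ⟨cnd, hcnd⟩ : ∃ c : Fin n → Prop, c = fun q : Fin n => 0 < d (Sum.inl q) := ⟨_, rfl⟩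
  set e : DD n := dvec cnd with he
  have hle : ∀ s, e s ≤ d s := by
    intro s
    rcases s with t | t
    · rw [he, dvec_apply_inl]
      split
      · rename_i hmem
        have := hmem.2
        rw [hcnd] at this
        omega
      · omega
    · rw [he, dvec_apply_inr]
      split
      · rename_i hmem
        obtain ⟨hm, hnc⟩ := hmem
        rw [intF, Finset.mem_filter] at hm
        have hc := hcomp t hm.2.1 hm.2.2
        rw [cF] at hc
        rw [hcnd] at hnc
        omega
      · omega
  have hd : d = (d - e) + e := by
    ext s
    have := hle s
    simp only [Finsupp.coe_add, Finsupp.coe_tsub, Pi.add_apply, Pi.sub_apply]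
    omega
  have htle : aF e ≤ n - 2 := by
    rw [he, aF_dvec]
    exact le_trans (Finset.card_filter_le _ _) (le_of_eq (card_intF hn))
  set t : ℕ := aF e with htdef
  have hcon : Con e (dvec (fun q : Fin n => (q : ℕ) + 1 ≤ t + 1)) := by
    have h2 : aF (dvec cnd) = aF (dvec (fun q : Fin n => (q : ℕ) + 1 ≤ t + 1)) := by
      rw [aF_dvec (fun q : Fin n => (q : ℕ) + 1 ≤ t + 1),
        count_interior' hn t htle (fun q : Fin n => (q : ℕ) + 1 ≤ t + 1) (fun q => Iff.rfl),
        htdef, he]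
    rw [he]
    exact con_dvec_dvec hn _ _ h2
  have hdiff : MvPolynomial.monomial e (1 : K)
      - MvPolynomial.monomial (dvec (fun q : Fin n => (q : ℕ) + 1 ≤ t + 1)) 1
      ∈ bei K (lineG n) := diff_mem_of_con hcon
  have hmg : mgen K n (t + 1) = MvPolynomial.monomial
      (dvec (fun q : Fin n => (q : ℕ) + 1 ≤ t + 1)) (1 : K) := mgen_eq (t + 1)
  have hsplit : MvPolynomial.monomial d (1 : K)
      = MvPolynomial.monomial (d - e) 1 *
          (MvPolynomial.monomial e (1 : K)
            - MvPolynomial.monomial (dvec (fun q : Fin n => (q : ℕ) + 1 ≤ t + 1)) 1)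
        + MvPolynomial.monomial (d - e) 1 * mgen K n (t + 1) := by
    rw [hmg, mul_sub]
    rw [mono_mul_mono, mono_mul_mono]
    rw [sub_add_cancel]
    rw [← hd]
  rw [hsplit]
  apply Ideal.add_mem
  · exact Ideal.mem_sup_left (Ideal.mul_mem_left _ _ hdiff)
  · apply Ideal.mem_sup_right
    apply Ideal.mul_mem_left
    apply Ideal.subset_span
    exact ⟨t + 1, by omega, by omega, rfl⟩

open Classical in
lemma mgen_mul_g_mem (z l : Fin n) (hz : (z : ℕ) = 0) (hl : (l : ℕ) = n - 1) (hn : 3 ≤ n)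
    (i : ℕ) :
    mgen K n i * (xv K z * yv K l - xv K l * yv K z) ∈ bei K (lineG n) := by
  rw [mgen_eq]
  exact mono_mul_g_mem z l hz hl hn _ (fun q h1 h2 => dvec_complete _ q h1 h2)

open Classical in
lemma coeff_filter_sum (f : MvPolynomial (Fin n ⊕ Fin n) K) (P : DD n → Prop) (d : DD n) :
    MvPolynomial.coeff d (∑ e ∈ f.support, if P e then MvPolynomial.monomial e (f.coeff e) else 0)
      = if P d then f.coeff d else 0 := by
  rw [MvPolynomial.coeff_sum]
  by_cases hdf : d ∈ f.support
  · rw [Finset.sum_eq_single d]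
    · split
      · rw [MvPolynomial.coeff_monomial, if_pos rfl]
      · rw [MvPolynomial.coeff_zero]
    · intro b _ hbd
      split
      · rw [MvPolynomial.coeff_monomial, if_neg hbd]
      · rw [MvPolynomial.coeff_zero]
    · intro habs; exact absurd hdf habs
  · have hf0 : f.coeff d = 0 := MvPolynomial.notMem_support_iff.mp hdf
    rw [hf0]
    have hz : ∀ b ∈ f.support,
        MvPolynomial.coeff d (if P b then MvPolynomial.monomial b (f.coeff b) else 0) = 0 := by
      intro b hb
      split
      · rw [MvPolynomial.coeff_monomial, if_neg (by rintro rfl; exact hdf hb)]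
      · rw [MvPolynomial.coeff_zero]
    rw [Finset.sum_eq_zero hz]
    split <;> rfl


end Aux

/-- Let `n ≥ 3`, let `L` be the line (path) on `[n]` with binomial
edge ideal `I_L`, let `g = x_1 y_n − x_n y_1`, let `J_G̃` be the binomial edge ideal
of the complete graph on `[n]`, and let `M` be the monomial ideal generated by the
`n−1` monomials `x_2 x_3 ⋯ x_i y_{i+1} ⋯ y_{n−1}` for `i = 1, …, n−1`.  Then
`I_L : g = (I_L, M)`, and consequently `(I_L : g) + J_G̃ = M + J_G̃`. -/


theorem statement16 (K : Type) [Field K] (n : ℕ) (hn : 3 ≤ n) :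
    (bei K (lineG n)).colon (Ideal.span {gElt K (show 0 < n by omega)}) =
      bei K (lineG n) ⊔ monoM K n ∧
    (bei K (lineG n)).colon (Ideal.span {gElt K (show 0 < n by omega)}) ⊔
        bei K (⊤ : SimpleGraph (Fin n)) =
      monoM K n ⊔ bei K (⊤ : SimpleGraph (Fin n)) := by
  classical
  have hpos : 0 < n := by omega
  set z : Fin n := ⟨0, hpos⟩ with hzdef
  set l : Fin n := ⟨n - 1, by omega⟩ with hldef
  have hzv : (z : ℕ) = 0 := rfl
  have hlv : (l : ℕ) = n - 1 := rfl
  have part1 : (bei K (lineG n)).colon (Ideal.span {gElt K (show 0 < n by omega)}) =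
      bei K (lineG n) ⊔ monoM K n := by
    apply le_antisymm
    · intro f hf
      rw [Ideal.mem_colon_span_singleton] at hf
      have hfg : f * (xv K z * yv K l - xv K l * yv K z) ∈ bei K (lineG n) := hf
      obtain ⟨Cmp, hCmp⟩ : ∃ c : DD n → Prop,
          c = fun d => ∀ q : Fin n, 0 < (q : ℕ) → (q : ℕ) < n - 1 → 0 < cF q d := ⟨_, rfl⟩
      set fc : MvPolynomial (Fin n ⊕ Fin n) K :=
        ∑ e ∈ f.support, if Cmp e then MvPolynomial.monomial e (f.coeff e) else 0 with hfc
      have hfc_mem : fc ∈ bei K (lineG n) ⊔ monoM K n := by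
        rw [hfc]
        refine Ideal.sum_mem _ fun e he => ?_
        split
        · rename_i hce
          have h1 := complete_mono_mem (K := K) hn e (by rw [hCmp] at hce; exact hce)
          have h2 : MvPolynomial.monomial e (f.coeff e)
              = MvPolynomial.C (f.coeff e) * MvPolynomial.monomial e 1 := by
            rw [MvPolynomial.C_mul_monomial, mul_one]
          rw [h2]
          exact Ideal.mul_mem_left _ _ h1
        · exact Ideal.zero_mem _
      have hfcg : fc * (xv K z * yv K l - xv K l * yv K z) ∈ bei K (lineG n) := by
        rw [hfc, Finset.sum_mul]
        refine Ideal.sum_mem _ fun e he => ?_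
        split
        · rename_i hce
          have h1 := mono_mul_g_mem (K := K) z l hzv hlv hn e (by rw [hCmp] at hce; exact hce)
          have h2 : MvPolynomial.monomial e (f.coeff e) * (xv K z * yv K l - xv K l * yv K z)
              = MvPolynomial.C (f.coeff e)
                * (MvPolynomial.monomial e 1 * (xv K z * yv K l - xv K l * yv K z)) := by
            rw [← mul_assoc, MvPolynomial.C_mul_monomial, mul_one]
          rw [h2]
          exact Ideal.mul_mem_left _ _ h1
        · rw [zero_mul]; exact Ideal.zero_mem _
      set f' : MvPolynomial (Fin n ⊕ Fin n) K := f - fc with hf'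
      have hf'g : f' * (xv K z * yv K l - xv K l * yv K z) ∈ bei K (lineG n) := by
        rw [hf', sub_mul]
        exact Ideal.sub_mem _ hfg hfcg
      have hf'coeff : ∀ e, f'.coeff e = if Cmp e then 0 else f.coeff e := by
        intro e
        rw [hf', MvPolynomial.coeff_sub, hfc, coeff_filter_sum f Cmp e]
        split <;> ring
      have hf'mem : f' ∈ bei K (lineG n) := by
        refine key_incomplete z l hzv hlv hn f' hf'g ?_
        intro e he
        rw [MvPolynomial.mem_support_iff, hf'coeff e] at he
        have hnc : ¬ Cmp e := by
          intro hc
          rw [if_pos hc] at he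
          exact he rfl
        have hnc' : ¬ (∀ q : Fin n, 0 < (q : ℕ) → (q : ℕ) < n - 1 → 0 < cF q e) := by
          rw [hCmp] at hnc; exact hnc
        push_neg at hnc'
        obtain ⟨q, h1, h2, h3⟩ := hnc'
        exact ⟨q, h1, h2, by omega⟩
      have hsplit : f = f' + fc := by rw [hf']; ring
      rw [hsplit]
      exact Ideal.add_mem _ (Ideal.mem_sup_left hf'mem) hfc_mem
    · apply sup_le
      · intro x hx
        rw [Ideal.mem_colon_span_singleton]
        exact Ideal.mul_mem_right _ _ hx
      · rw [monoM, Ideal.span_le]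
        rintro x ⟨i, h1, h2, rfl⟩
        rw [SetLike.mem_coe, Ideal.mem_colon_span_singleton]
        exact mgen_mul_g_mem z l hzv hlv hn i
  refine ⟨part1, ?_⟩
  rw [part1]
  have hIJ : bei K (lineG n) ≤ bei K (⊤ : SimpleGraph (Fin n)) := by
    rw [bei, bei]
    apply Ideal.span_mono
    rintro x ⟨i, j, hij, hadj, rfl⟩
    exact ⟨i, j, hij, by simp [SimpleGraph.top_adj]; exact Fin.ne_of_lt hij, rfl⟩
  rw [sup_assoc, sup_eq_right.mpr (hIJ.trans le_sup_right)]


end BEIPaper
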